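/- Let κ ∈ Γ_k ⊂ ℝⁿ with κ_1 ≥ ⋯ ≥ κ_n and suppose κ_n ≤ −δ κ_1 for some δ ∈ (0,1). Then Σ_i σ_{k-1}(κ|i) κ_i² ≥ C(n,k) δ² κ_1² Σ_i σ_{k-1}(κ|i) for a positive constant C(n,k) depending only on n and k. -/

import Mathlib

open Finset

/-- The `k`-th elementary symmetric polynomial of `κ ∈ ℝⁿ`. -/
noncomputable def esymm (n k : ℕ) (κ : Fin n → ℝ) : ℝ :=
  ∑ s ∈ Finset.powersetCard k Finset.univ, ∏ i ∈ s, κ i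

namespace Stmt16Aux

/-- Elementary symmetric function of `κ` restricted to a base finset `A`. -/
noncomputable def E {ι : Type*} [DecidableEq ι] (A : Finset ι) (j : ℕ) (κ : ι → ℝ) : ℝ :=
  ∑ s ∈ A.powersetCard j, ∏ i ∈ s, κ i

variable {ι : Type*} [DecidableEq ι]

lemma E_zero (A : Finset ι) (κ : ι → ℝ) : E A 0 κ = 1 := by
  simp [E]

lemma E_pos (A : Finset ι) {j : ℕ} (κ : ι → ℝ) (h : ∀ i ∈ A, 0 < κ i) (hj : j ≤ A.card) :
    0 < E A j κ := by
  apply Finset.sum_pos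
  · intro s hs
    rw [mem_powersetCard] at hs
    exact Finset.prod_pos fun i hi => h i (hs.1 hi)
  · exact powersetCard_nonempty.2 hj

lemma E_erase (A : Finset ι) {i : ι} (hi : i ∈ A) (j : ℕ) (κ : ι → ℝ) :
    E A (j+1) κ = E (A.erase i) (j+1) κ + κ i * E (A.erase i) j κ := by
  conv_lhs => rw [E, ← Finset.insert_erase hi,
    powersetCard_succ_insert (Finset.notMem_erase i A)]
  rw [Finset.sum_union ?dis, Finset.sum_image ?inj]
  · congr 1
    rw [E, Finset.mul_sum]
    refine Finset.sum_congr rfl fun s hs => ?_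
    rw [mem_powersetCard] at hs
    have his : i ∉ s := fun h => (Finset.notMem_erase i A) (hs.1 h)
    rw [Finset.prod_insert his]
  case inj =>
    intro s hs t ht hst
    rw [Finset.mem_coe, mem_powersetCard] at hs ht
    have his : i ∉ s := fun h => (Finset.notMem_erase i A) (hs.1 h)
    have hit : i ∉ t := fun h => (Finset.notMem_erase i A) (ht.1 h)
    ext x
    constructor <;> intro hx
    · have := hst ▸ Finset.mem_insert_of_mem hx
      rcases Finset.mem_insert.1 this with h | h
      · exact absurd (h ▸ hx) his
      · exact h
    · have := hst.symm ▸ Finset.mem_insert_of_mem hx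
      rcases Finset.mem_insert.1 this with h | h
      · exact absurd (h ▸ hx) hit
      · exact h
  case dis =>
    rw [Finset.disjoint_left]
    intro s hs hs'
    rw [mem_powersetCard] at hs
    obtain ⟨t, ht, rfl⟩ := Finset.mem_image.1 hs'
    exact (Finset.notMem_erase i A) (hs.1 (Finset.mem_insert_self i t))

lemma sum_E_erase (A : Finset ι) (j : ℕ) (κ : ι → ℝ) :
    ∑ i ∈ A, E (A.erase i) j κ = ((A.card : ℝ) - j) * E A j κ := by
  unfold E
  rw [Finset.sum_comm' (s' := fun s => A \ s) (t' := A.powersetCard j)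
    (f := fun _ s => ∏ x ∈ s, κ x) ?h]
  · rw [Finset.mul_sum]
    refine Finset.sum_congr rfl fun s hs => ?_
    rw [mem_powersetCard] at hs
    rw [Finset.sum_const, Finset.card_sdiff_of_subset hs.1, hs.2, nsmul_eq_mul, Nat.cast_sub]
    exact hs.2 ▸ Finset.card_le_card hs.1
  case h =>
    intro i s
    simp only [mem_powersetCard, Finset.mem_sdiff, Finset.subset_erase]
    tauto

lemma sum_mul_E_erase (A : Finset ι) (j : ℕ) (κ : ι → ℝ) :
    ∑ i ∈ A, κ i * E (A.erase i) j κ = ((j : ℝ) + 1) * E A (j+1) κ := by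
  have h1 : ∀ i ∈ A, κ i * E (A.erase i) j κ
      = E A (j+1) κ - E (A.erase i) (j+1) κ := by
    intro i hi
    have := E_erase A hi j κ
    linarith
  rw [Finset.sum_congr rfl h1, Finset.sum_sub_distrib, Finset.sum_const, sum_E_erase,
    nsmul_eq_mul]
  push_cast
  ring

lemma card_supersets {A B : Finset ι} (hB : B ⊆ A) {j : ℕ} (hm : B.card ≤ j) :
    ((A.powersetCard j).filter (fun s => B ⊆ s)).card
      = (A.card - B.card).choose (j - B.card) := by
  rw [← Finset.card_sdiff_of_subset hB, ← Finset.card_powersetCard (j - B.card) (A \ B)]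
  apply Finset.card_nbij' (fun s => s \ B) (fun t => t ∪ B)
  · intro s hs
    simp only [Finset.mem_coe, Finset.mem_filter, mem_powersetCard] at hs
    obtain ⟨⟨hsA, hsc⟩, hBs⟩ := hs
    rw [Finset.mem_coe, mem_powersetCard]
    exact ⟨Finset.sdiff_subset_sdiff hsA Finset.Subset.rfl,
      by rw [Finset.card_sdiff_of_subset hBs, hsc]⟩
  · intro t ht
    rw [Finset.mem_coe, mem_powersetCard] at ht
    obtain ⟨htAB, htc⟩ := ht
    have htA : t ⊆ A := htAB.trans Finset.sdiff_subset
    have hd : Disjoint t B := Finset.disjoint_of_subset_left htAB Finset.sdiff_disjoint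
    simp only [Finset.mem_coe, Finset.mem_filter, mem_powersetCard]
    refine ⟨⟨Finset.union_subset htA hB, ?_⟩, Finset.subset_union_right⟩
    rw [Finset.card_union_of_disjoint hd, htc]
    omega
  · intro s hs
    simp only [Finset.mem_coe, Finset.mem_filter, mem_powersetCard] at hs
    exact Finset.sdiff_union_of_subset hs.2
  · intro t ht
    rw [Finset.mem_coe, mem_powersetCard] at ht
    have hd : Disjoint t B := Finset.disjoint_of_subset_left ht.1 Finset.sdiff_disjoint
    exact Finset.union_sdiff_cancel_right hd

lemma E_shift (A : Finset ι) (j : ℕ) (κ : ι → ℝ) (s : ℝ) :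
    E A j (fun m => κ m + s)
      = ∑ m ∈ range (j+1), ((A.card - m).choose (j - m) : ℝ) * s^(j-m) * E A m κ := by
  have step1 : E A j (fun m => κ m + s)
      = ∑ S ∈ A.powersetCard j, ∑ B ∈ S.powerset, (∏ i ∈ B, κ i) * s ^ (j - B.card) := by
    unfold E
    refine Finset.sum_congr rfl fun S hS => ?_
    rw [mem_powersetCard] at hS
    rw [Finset.prod_add]
    refine Finset.sum_congr rfl fun B hB => ?_
    rw [Finset.mem_powerset] at hB
    rw [Finset.prod_const, Finset.card_sdiff_of_subset hB, hS.2]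
  rw [step1,
    Finset.sum_comm' (s' := fun B => (A.powersetCard j).filter (fun S => B ⊆ S))
      (t' := A.powerset) (f := fun _ B => (∏ i ∈ B, κ i) * s ^ (j - B.card)) ?hc,
    Finset.sum_powerset]
  case hc =>
    intro S B
    simp only [mem_powersetCard, Finset.mem_powerset, Finset.mem_filter]
    constructor
    · rintro ⟨⟨h1, h2⟩, h3⟩; exact ⟨⟨⟨h1, h2⟩, h3⟩, h3.trans h1⟩
    · rintro ⟨⟨⟨h1, h2⟩, h3⟩, h4⟩; exact ⟨⟨h1, h2⟩, h3⟩
  have hmid : ∀ m ∈ range (A.card + 1),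
      (∑ B ∈ A.powersetCard m, ∑ _S ∈ (A.powersetCard j).filter (fun S => B ⊆ S),
        (∏ i ∈ B, κ i) * s ^ (j - B.card))
      = (if m ≤ j then ((A.card - m).choose (j - m) : ℝ) * s^(j-m) * E A m κ else 0) := by
    intro m _
    by_cases hmj : m ≤ j
    · rw [if_pos hmj]
      unfold E
      rw [Finset.mul_sum]
      refine Finset.sum_congr rfl fun B hB => ?_
      rw [mem_powersetCard] at hB
      rw [Finset.sum_const, card_supersets hB.1 (hB.2 ▸ hmj), hB.2, nsmul_eq_mul]
      ring
    · rw [if_neg hmj]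
      refine Finset.sum_eq_zero fun B hB => ?_
      rw [mem_powersetCard] at hB
      refine Finset.sum_eq_zero fun S hS => ?_
      rw [Finset.mem_filter, mem_powersetCard] at hS
      exact absurd (hB.2 ▸ hS.1.2 ▸ Finset.card_le_card hS.2) hmj
  rw [Finset.sum_congr rfl hmid]
  have hE0 : ∀ m, A.card < m → E A m κ = 0 := by
    intro m hm
    unfold E
    rw [Finset.powersetCard_eq_empty.2 hm, Finset.sum_empty]
  rcases le_or_gt j A.card with h | h
  · rw [← Finset.sum_subset (Finset.range_subset_range.2 (by omega) :
      range (j+1) ⊆ range (A.card + 1)) (fun m _ hm => ?_)]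
    · refine Finset.sum_congr rfl fun m hm => ?_
      rw [Finset.mem_range] at hm
      rw [if_pos (by omega)]
    · rw [Finset.mem_range, not_lt] at hm
      rw [if_neg (by omega)]
  · rw [← Finset.sum_subset (Finset.range_subset_range.2 (by omega) :
      range (A.card+1) ⊆ range (j + 1)) (fun m _ hm => ?_)]
    · refine Finset.sum_congr rfl fun m hm => ?_
      rw [Finset.mem_range] at hm
      rw [if_pos (by omega)]
    · rw [Finset.mem_range, not_lt] at hm
      rw [hE0 m (by omega)]
      ring

lemma E_cont (A : Finset ι) (j : ℕ) (κ : ι → ℝ) :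
    Continuous fun s : ℝ => E A j (fun m => κ m + s) := by
  unfold E
  exact continuous_finset_sum _ fun t _ =>
    continuous_finset_prod _ fun i _ => by continuity

/-- Along the ray `κ + s·𝟙`, positivity of `σ_1,…,σ_j` is preserved for `s ≥ 0`. -/
lemma E_shift_pos (A : Finset ι) {j : ℕ} (κ : ι → ℝ) {s : ℝ} (hj : 1 ≤ j) (hs : 0 ≤ s)
    (hpos : ∀ m, 1 ≤ m → m ≤ j → 0 < E A m κ) : 0 < E A j (fun x => κ x + s) := by
  rw [E_shift]
  apply Finset.sum_pos' ?nonneg ⟨j, Finset.self_mem_range_succ j, ?pos⟩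
  case nonneg =>
    intro m hm
    rw [Finset.mem_range] at hm
    rcases Nat.eq_zero_or_pos m with rfl | hm1
    · rw [E_zero]
      positivity
    · have := (hpos m hm1 (by omega)).le
      positivity
  case pos =>
    simp only [Nat.sub_self, pow_zero, Nat.choose_zero_right, Nat.cast_one, one_mul, mul_one]
    exact hpos j hj le_rfl

/-- Perturbation by `ε > 0` makes all `σ_1,…,σ_j` strictly positive
    if they were nonnegative. -/
lemma E_shift_pos' (A : Finset ι) {j : ℕ} (κ : ι → ℝ) {ε : ℝ} (hj : 1 ≤ j)
    (hjA : j ≤ A.card) (hε : 0 < ε)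
    (h : ∀ m, 1 ≤ m → m ≤ j → 0 ≤ E A m κ) : 0 < E A j (fun x => κ x + ε) := by
  rw [E_shift]
  apply Finset.sum_pos' ?nonneg ⟨0, Finset.mem_range.2 (by omega), ?pos⟩
  case nonneg =>
    intro m hm
    rw [Finset.mem_range] at hm
    rcases Nat.eq_zero_or_pos m with rfl | hm1
    · rw [E_zero]
      positivity
    · have := h m hm1 (by omega)
      positivity
  case pos =>
    rw [E_zero, Nat.sub_zero, Nat.sub_zero, mul_one]
    have hc : 0 < (A.card.choose j : ℝ) := by
      exact_mod_cast Nat.choose_pos hjA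
    positivity

/-- Main positivity lemma: if `σ_1,…,σ_{k+1} > 0` on base `A`, then
    `σ_k` with any one entry removed is positive. -/
lemma main_pos : ∀ k : ℕ, ∀ (A : Finset ι) (κ : ι → ℝ), k + 1 ≤ A.card →
    (∀ j, 1 ≤ j → j ≤ k + 1 → 0 < E A j κ) → ∀ i ∈ A, 0 < E (A.erase i) k κ := by
  intro k
  induction k using Nat.strong_induction_on with
  | _ k IH =>
  intro A κ hcard hΓ i hi
  rcases Nat.eq_zero_or_pos k with rfl | hk1
  · rw [E_zero]; norm_num
  by_contra hneg
  push_neg at hneg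
  set A' := A.erase i with hA'
  have hcardA' : A'.card = A.card - 1 := Finset.card_erase_of_mem hi
  have hcard' : k ≤ A'.card := by omega
  -- a large shift making all entries positive
  set M : ℝ := 1 + ∑ m ∈ A', |κ m| with hM
  have hM0 : (0:ℝ) ≤ M := by positivity
  have hgM : 0 < E A' k (fun x => κ x + M) := by
    apply E_pos _ _ ?_ hcard'
    intro m hm
    have h1 : |κ m| ≤ ∑ x ∈ A', |κ x| :=
      Finset.single_le_sum (f := fun x => |κ x|) (fun x _ => abs_nonneg _) hm
    have h2 := neg_abs_le (κ m)
    rw [hM]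
    linarith
  -- IVT: find s₀ with E A' k (κ + s₀) = 0
  have hcont : Continuous fun s : ℝ => E A' k (fun x => κ x + s) := E_cont _ _ _
  have h00 : E A' k (fun x => κ x + 0) ≤ 0 := by
    simpa using hneg
  obtain ⟨s₀, hs₀mem, hs₀⟩ : ∃ s₀ ∈ Set.Icc (0:ℝ) M,
      E A' k (fun x => κ x + s₀) = 0 := by
    have hmem : (0:ℝ) ∈ Set.Icc (E A' k (fun x => κ x + 0)) (E A' k (fun x => κ x + M)) :=
      ⟨h00, hgM.le⟩
    have := intermediate_value_Icc hM0 hcont.continuousOn hmem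
    obtain ⟨s₀, hs₀mem, hs₀⟩ := this
    exact ⟨s₀, hs₀mem, hs₀⟩
  have hs₀0 : (0:ℝ) ≤ s₀ := hs₀mem.1
  set ν : ι → ℝ := fun x => κ x + s₀ with hν
  have hray : ∀ j, 1 ≤ j → j ≤ k + 1 → 0 < E A j ν := fun j h1 h2 =>
    E_shift_pos A κ h1 hs₀0 (fun m hm1 hm2 => hΓ m hm1 (hm2.trans h2))
  have hzero : E A' k ν = 0 := hs₀
  -- E A' (k+1) ν > 0
  have htop : 0 < E A' (k+1) ν := by
    have he := E_erase A hi k ν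
    rw [hzero] at he
    have h2 := hray (k+1) (by omega) le_rfl
    rw [← hA'] at he
    linarith
  -- positivity of E A' m ν for 1 ≤ m ≤ k - 1
  have hmidpos : ∀ m, 1 ≤ m → m ≤ k - 1 → 0 < E A' m ν := by
    intro m hm1 hm2
    exact IH m (by omega) A ν (by omega)
      (fun j hj1 hj2 => hray j hj1 (by omega)) i hi
  have hmidnonneg : ∀ m, 1 ≤ m → m ≤ k → 0 ≤ E A' m ν := by
    intro m hm1 hm2
    rcases eq_or_lt_of_le hm2 with rfl | hlt
    · exact hzero.ge
    · exact (hmidpos m hm1 (by omega)).le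
  -- nonnegativity of the doubly-erased σ_{k-1}
  have hd : ∀ m ∈ A', 0 ≤ E (A'.erase m) (k-1) ν := by
    intro m hm
    rcases Nat.eq_zero_or_pos (k-1) with h0 | hk2
    · rw [h0, E_zero]; norm_num
    have hstep : ∀ ε : ℝ, 0 < ε → 0 < E (A'.erase m) (k-1) (fun x => ν x + ε) := by
      intro ε hε
      refine IH (k-1) (by omega) A' (fun x => ν x + ε) (by omega) ?_ m hm
      intro j hj1 hj2
      have hjk : j ≤ k := by omega
      exact E_shift_pos' A' ν hj1 (by omega) hε
        (fun m' hm1 hm2 => hmidnonneg m' hm1 (by omega))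
    have htend : Filter.Tendsto (fun ε : ℝ => E (A'.erase m) (k-1) (fun x => ν x + ε))
        (nhdsWithin 0 (Set.Ioi 0)) (nhds (E (A'.erase m) (k-1) (fun x => ν x + 0))) :=
      ((E_cont (A'.erase m) (k-1) ν).tendsto 0).mono_left nhdsWithin_le_nhds
    have h0le : 0 ≤ E (A'.erase m) (k-1) (fun x => ν x + 0) := by
      refine ge_of_tendsto htend ?_
      filter_upwards [self_mem_nhdsWithin] with ε hε
      exact (hstep ε hε).le
    simpa using h0le
  -- final contradiction
  have hk1' : k - 1 + 1 = k := by omega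
  have hsum : ∑ m ∈ A', ν m * E (A'.erase m) (k-1) ν = (((k-1 : ℕ) : ℝ) + 1) * E A' (k-1+1) ν :=
    sum_mul_E_erase A' (k-1) ν
  rw [hk1', hzero, mul_zero] at hsum
  have hsum2 : ∑ m ∈ A', ν m * E (A'.erase m) k ν = ((k:ℝ) + 1) * E A' (k+1) ν :=
    sum_mul_E_erase A' k ν
  have hterm : ∀ m ∈ A', ν m * E (A'.erase m) k ν = - (ν m)^2 * E (A'.erase m) (k-1) ν := by
    intro m hm
    have he := E_erase A' hm (k-1) ν
    rw [hk1', hzero] at he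
    have h3 : E (A'.erase m) k ν = - (ν m * E (A'.erase m) (k-1) ν) := by linarith
    rw [h3]
    ring
  rw [Finset.sum_congr rfl hterm] at hsum2
  have hle : ∑ m ∈ A', -(ν m)^2 * E (A'.erase m) (k-1) ν ≤ 0 := by
    apply Finset.sum_nonpos
    intro m hm
    have h1 := hd m hm
    nlinarith [sq_nonneg (ν m)]
  have hk0 : (0:ℝ) < (k:ℝ) + 1 := by positivity
  nlinarith [htop]

end Stmt16Aux

open Stmt16Aux

lemma esymm_eq_E (n j : ℕ) (κ : Fin n → ℝ) : esymm n j κ = E Finset.univ j κ := rfl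

lemma esymm_update_eq (n j : ℕ) (κ : Fin n → ℝ) (i : Fin n) :
    esymm n j (Function.update κ i 0) = E (Finset.univ.erase i) j κ := by
  rw [esymm_eq_E]
  unfold E
  have hfil : (Finset.univ.erase i).powersetCard j
      = (Finset.univ.powersetCard j).filter (fun s => i ∉ s) := by
    ext S
    simp only [mem_powersetCard, Finset.mem_filter, Finset.subset_erase]
    tauto
  rw [hfil, ← Finset.sum_filter_add_sum_filter_not (Finset.univ.powersetCard j)
    (fun s => i ∉ s) (fun s => ∏ x ∈ s, Function.update κ i 0 x)]
  have h1 : ∑ s ∈ (Finset.univ.powersetCard j).filter (fun s => ¬ i ∉ s),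
      ∏ x ∈ s, Function.update κ i 0 x = 0 := by
    apply Finset.sum_eq_zero
    intro s hs
    rw [Finset.mem_filter, not_not] at hs
    exact Finset.prod_eq_zero hs.2 (Function.update_self i 0 κ)
  rw [h1, add_zero]
  refine Finset.sum_congr rfl fun s hs => ?_
  rw [Finset.mem_filter] at hs
  refine Finset.prod_congr rfl fun x hx => ?_
  exact Function.update_of_ne (fun h => hs.2 (by rw [← h]; exact hx)) 0 κ

lemma E_one' (n : ℕ) (κ : Fin n → ℝ) : E Finset.univ 1 κ = ∑ m : Fin n, κ m := by
  have h := sum_mul_E_erase Finset.univ 0 κ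
  simp only [E_zero, mul_one, Nat.cast_zero, zero_add, one_mul] at h
  exact h.symm

/-- If κ ∈ Γ_k is ordered decreasingly and κ_n ≤ −δκ_1 with δ ∈ (0,1), then
    Σ_i σ_{k-1}(κ|i) κ_i² ≥ C(n,k) δ² κ_1² Σ_i σ_{k-1}(κ|i) for some C(n,k) > 0. -/
theorem stmt16 (n k : ℕ) (hk : 1 ≤ k) (hkn : k ≤ n) :
    ∃ C : ℝ, 0 < C ∧
      ∀ κ : Fin n → ℝ, (∀ i j : Fin n, i ≤ j → κ j ≤ κ i) →
        (∀ j, 1 ≤ j → j ≤ k → 0 < esymm n j κ) →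
        ∀ δ : ℝ, 0 < δ → δ < 1 →
          κ ⟨n - 1, by omega⟩ ≤ -δ * κ ⟨0, by omega⟩ →
          C * δ ^ 2 * κ ⟨0, by omega⟩ ^ 2 *
              (∑ i : Fin n, esymm n (k - 1) (Function.update κ i 0))
            ≤ ∑ i : Fin n, esymm n (k - 1) (Function.update κ i 0) * κ i ^ 2 := by
  have hn0 : 0 < n := by omega
  refine ⟨1 / n, by positivity, ?_⟩
  intro κ hord hΓ δ hδ0 hδ1 hκn
  set i0 : Fin n := ⟨0, by omega⟩ with hi0
  set iN : Fin n := ⟨n - 1, by omega⟩ with hiN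
  have hcard : (Finset.univ : Finset (Fin n)).card = n := by simp
  have hΓ' : ∀ j, 1 ≤ j → j ≤ k → 0 < E (Finset.univ : Finset (Fin n)) j κ := by
    intro j h1 h2
    rw [← esymm_eq_E]
    exact hΓ j h1 h2
  -- positivity of all σ_{k-1}(κ|i)
  have hσpos : ∀ i : Fin n, 0 < E (Finset.univ.erase i) (k-1) κ := by
    intro i
    refine main_pos (k-1) Finset.univ κ (by omega) ?_ i (Finset.mem_univ i)
    intro j h1 h2
    exact hΓ' j h1 (by omega)
  -- κ i0 > 0
  have hκ0 : 0 < κ i0 := by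
    have h1 : 0 < E (Finset.univ : Finset (Fin n)) 1 κ := hΓ' 1 le_rfl hk
    rw [E_one'] at h1
    have h2 : ∑ m : Fin n, κ m ≤ ∑ _m : Fin n, κ i0 := by
      apply Finset.sum_le_sum
      intro m _
      exact hord i0 m (by simp [hi0, Fin.le_def])
    rw [Finset.sum_const, hcard, nsmul_eq_mul] at h2
    nlinarith [h1.trans_le h2]
  -- κ iN < 0 and square bound
  have hκN : κ iN < 0 := lt_of_le_of_lt hκn (by nlinarith)
  have hsq : δ^2 * κ i0^2 ≤ κ iN ^ 2 := by
    have h2 : 0 ≤ δ * κ i0 := by positivity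
    have h1 : δ * κ i0 ≤ -κ iN := by linarith
    nlinarith [mul_self_le_mul_self h2 h1]
  -- σ_{k-1}(κ) ≤ σ_{k-1}(κ|iN)
  have hEk1pos : 0 < E (Finset.univ : Finset (Fin n)) (k-1) κ := by
    rcases Nat.eq_zero_or_pos (k-1) with h0 | hpos
    · rw [h0, E_zero]; norm_num
    · exact hΓ' (k-1) hpos (by omega)
  have hσN_ge : E (Finset.univ : Finset (Fin n)) (k-1) κ
      ≤ E (Finset.univ.erase iN) (k-1) κ := by
    rcases Nat.eq_zero_or_pos (k-1) with h0 | hpos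
    · rw [h0, E_zero, E_zero]
    · have hk2 : k - 1 - 1 + 1 = k - 1 := by omega
      have he := E_erase Finset.univ (Finset.mem_univ iN) (k-1-1) κ
      rw [hk2] at he
      have hd2 : 0 < E (Finset.univ.erase iN) (k-1-1) κ := by
        refine main_pos (k-1-1) Finset.univ κ (by omega) ?_ iN (Finset.mem_univ iN)
        intro j h1 h2
        exact hΓ' j h1 (by omega)
      nlinarith
  -- sum identity
  have hsum : ∑ i : Fin n, E (Finset.univ.erase i) (k-1) κ
      = ((n : ℝ) - (k-1 : ℕ)) * E (Finset.univ : Finset (Fin n)) (k-1) κ := by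
    have := sum_E_erase (Finset.univ : Finset (Fin n)) (k-1) κ
    rwa [hcard] at this
  -- rewrite the goal in terms of E
  simp only [esymm_update_eq]
  rw [hsum]
  -- single term bound for the RHS
  have hRHS : E (Finset.univ.erase iN) (k-1) κ * κ iN ^ 2
      ≤ ∑ i : Fin n, E (Finset.univ.erase i) (k-1) κ * κ i ^ 2 := by
    apply Finset.single_le_sum (f := fun i => E (Finset.univ.erase i) (k-1) κ * κ i ^ 2)
    · intro i _
      have := (hσpos i).le
      positivity
    · exact Finset.mem_univ iN
  -- chain assembly
  have hcoef1 : (0:ℝ) ≤ (n : ℝ) - (k-1 : ℕ) := by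
    have : (k-1 : ℕ) ≤ n := by omega
    have := Nat.cast_le (α := ℝ) |>.2 this
    linarith
  have hcoef2 : ((n : ℝ) - (k-1 : ℕ)) ≤ n := by
    have : (0:ℝ) ≤ ((k-1 : ℕ) : ℝ) := Nat.cast_nonneg _
    linarith
  have hδκ : (0:ℝ) ≤ δ^2 * κ i0 ^2 := by positivity
  have step1 : 1 / (n:ℝ) * δ ^ 2 * κ i0 ^ 2 * (((n : ℝ) - (k-1 : ℕ))
      * E Finset.univ (k-1) κ) ≤ δ^2 * κ i0^2 * E Finset.univ (k-1) κ := by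
    rw [div_mul_eq_mul_div, div_mul_eq_mul_div, div_mul_eq_mul_div, div_le_iff₀ (by positivity)]
    nlinarith [hEk1pos.le, mul_nonneg hδκ hEk1pos.le]
  have step2 : δ^2 * κ i0^2 * E Finset.univ (k-1) κ
      ≤ δ^2 * κ i0^2 * E (Finset.univ.erase iN) (k-1) κ :=
    mul_le_mul_of_nonneg_left hσN_ge hδκ
  have step3 : δ^2 * κ i0^2 * E (Finset.univ.erase iN) (k-1) κ
      ≤ E (Finset.univ.erase iN) (k-1) κ * κ iN ^ 2 := by
    have := hσpos iN
    nlinarith [hsq]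
  linarith
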